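/- Let N be a normal subgroup of a finite group G such that N has exactly two non-central G-conjugacy classes A and B (i.e., G-classes of elements of N not in Z(G)), and suppose |A| and |B| are coprime. Then Z(G) ∩ N = 1. -/
import Mathlib


/-- The `G`-conjugacy class of `x`. -/
def gClass {G : Type*} [Group G] (x : G) : Set G := {y | ∃ g : G, y = g * x * g⁻¹}

lemma card_dvd_of_rightInvariant {G : Type*} [Group G] (K : Subgroup G) (S : Set G)
    (h : ∀ s ∈ S, ∀ k ∈ K, s * k ∈ S) : Nat.card K ∣ S.ncard := by
  have hS : S = QuotientGroup.mk ⁻¹' (QuotientGroup.mk '' S : Set (G ⧸ K)) := by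
    ext g
    constructor
    · exact fun hg => ⟨g, hg, rfl⟩
    · rintro ⟨s, hs, hsg⟩
      have hk : s⁻¹ * g ∈ K := QuotientGroup.eq.mp hsg
      have := h s hs _ hk
      simpa [mul_assoc] using this
  have key : S.ncard = Nat.card K * (QuotientGroup.mk '' S : Set (G ⧸ K)).ncard := by
    conv_lhs => rw [hS]
    rw [← Nat.card_coe_set_eq, ← Nat.card_coe_set_eq,
      Nat.card_congr (QuotientGroup.preimageMkEquivSubgroupProdSet K _), Nat.card_prod]
  exact ⟨_, key⟩

lemma gClass_mul_central {G : Type*} [Group G] (x z : G) (hz : z ∈ Subgroup.center G) :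
    gClass (x * z) = (· * z) '' gClass x := by
  have hzc := Subgroup.mem_center_iff.mp hz
  ext w
  constructor
  · rintro ⟨g, rfl⟩
    refine ⟨g * x * g⁻¹, ⟨g, rfl⟩, ?_⟩
    simp only [mul_assoc]
    rw [← hzc g⁻¹]
  · rintro ⟨v, ⟨g, rfl⟩, rfl⟩
    refine ⟨g, ?_⟩
    simp only [mul_assoc]
    rw [← hzc g⁻¹]

/-- If the normal subgroup `N` has exactly two non-central `G`-conjugacy classes, whose sizes
are coprime, then `Z(G) ∩ N = 1`. -/
theorem stmt_2 {G : Type*} [Group G] [Fintype G] (N : Subgroup G) [N.Normal]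
    (x y : G) (hxN : x ∈ N) (hyN : y ∈ N)
    (hxZ : x ∉ Subgroup.center G) (hyZ : y ∉ Subgroup.center G)
    (hne : gClass x ≠ gClass y)
    (hall : ∀ w ∈ N, w ∉ Subgroup.center G → gClass w = gClass x ∨ gClass w = gClass y)
    (hcop : Nat.Coprime (gClass x).ncard (gClass y).ncard) :
    Subgroup.center G ⊓ N = ⊥ := by
  -- the class sizes are distinct
  have hmem : ∀ u : G, u ∈ gClass u := fun u => ⟨1, by simp⟩
  have hncard1 : (gClass x).ncard ≠ 1 := by
    intro h1
    apply hxZ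
    rw [Subgroup.mem_center_iff]
    intro g
    obtain ⟨a, ha⟩ := Set.ncard_eq_one.mp h1
    have hx := hmem x
    rw [ha, Set.mem_singleton_iff] at hx
    subst hx
    have hgx : g * x * g⁻¹ ∈ gClass x := ⟨g, rfl⟩
    rw [ha, Set.mem_singleton_iff] at hgx
    have := congrArg (· * g) hgx
    simpa [mul_assoc] using this
  have hdiff : (gClass x).ncard ≠ (gClass y).ncard := by
    intro h
    rw [h] at hcop
    exact hncard1 (h ▸ hcop.eq_one_of_dvd dvd_rfl)
  -- invariance under right multiplication by central elements of N
  have key : ∀ u ∈ N, u ∉ Subgroup.center G →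
      (gClass u = gClass x ∨ gClass u = gClass y) →
      ∀ z, z ∈ Subgroup.center G ⊓ N → ∀ s ∈ gClass u, s * z ∈ gClass u := by
    intro u huN huZ hu z hzK s hs
    obtain ⟨hzZ, hzN⟩ := Subgroup.mem_inf.mp hzK
    have huzN : u * z ∈ N := N.mul_mem huN hzN
    have huzZ : u * z ∉ Subgroup.center G := by
      intro hc
      exact huZ (by simpa using (Subgroup.center G).mul_mem hc ((Subgroup.center G).inv_mem hzZ))
    have hcls := gClass_mul_central u z hzZ
    have hcard : (gClass (u * z)).ncard = (gClass u).ncard := by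
      rw [hcls]; exact Set.ncard_image_of_injective _ (mul_left_injective z)
    have heq : gClass (u * z) = gClass u := by
      rcases hall (u * z) huzN huzZ with h | h <;> rcases hu with h' | h'
      · rw [h, h']
      · exfalso; apply hdiff; rw [← h, hcard, h']
      · exfalso; apply hdiff; rw [← h', ← hcard, h]
      · rw [h, h']
    rw [← heq, hcls]
    exact ⟨s, hs, rfl⟩
  have hdvdx : Nat.card (Subgroup.center G ⊓ N : Subgroup G) ∣ (gClass x).ncard :=
    card_dvd_of_rightInvariant _ _ (fun s hs z hz =>
      key x hxN hxZ (Or.inl rfl) z hz s hs)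
  have hdvdy : Nat.card (Subgroup.center G ⊓ N : Subgroup G) ∣ (gClass y).ncard :=
    card_dvd_of_rightInvariant _ _ (fun s hs z hz =>
      key y hyN hyZ (Or.inr rfl) z hz s hs)
  have hd := Nat.dvd_gcd hdvdx hdvdy
  rw [Nat.Coprime] at hcop
  rw [hcop] at hd
  exact Subgroup.card_eq_one.mp (Nat.dvd_one.mp hd)
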